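/- Exponential decay of word probabilities and their ε-derivatives (Appendix D): fix ε ∈ (0,1/2) and let ρ = max{ (1−ε)π_00+επ_01, (1−ε)π_10+επ_11, επ_00+(1−ε)π_01, επ_10+(1−ε)π_11 }; then 0 < ρ < 1 and, for every binary sequence (z_i)_{i≥1}: (i) a_n + b_n ≤ ρ^n for all n ≥ 1; (ii) there exist a constant C > 0 and ρ_1 with ρ < ρ_1 < 1 (independent of the sequence (z_i)) such that |d a_n/dε| + |d b_n/dε| ≤ C·ρ_1^n for all n ≥ 1. -/

import Mathlib

/-- The pair `(a_k(ε), b_k(ε))` driven by the binary sequence `z`: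
`a_0 = π_10/(π_01+π_10)`, `b_0 = π_01/(π_01+π_10)`,
`a_k = p_E(z_k)(π_00 a_{k−1} + π_10 b_{k−1})`,
`b_k = p_E(1−z_k)(π_01 a_{k−1} + π_11 b_{k−1})`, where `p_E(0) = 1−ε`, `p_E(1) = ε`. -/
noncomputable def abIter (π00 π01 π10 π11 : ℝ) (z : ℕ → Bool) : ℕ → ℝ → ℝ × ℝ
  | 0 => fun _ => (π10 / (π01 + π10), π01 / (π01 + π10))
  | k + 1 => fun ε =>
      ((if z (k + 1) then ε else 1 - ε) *
          (π00 * (abIter π00 π01 π10 π11 z k ε).1 + π10 * (abIter π00 π01 π10 π11 z k ε).2),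
       (if z (k + 1) then 1 - ε else ε) *
          (π01 * (abIter π00 π01 π10 π11 z k ε).1 + π11 * (abIter π00 π01 π10 π11 z k ε).2))

/-- Appendix D: exponential decay of word probabilities and of their `ε`-derivatives.
With `ρ` the maximum of the four entries of the noisy transition matrix, `0 < ρ < 1`,
`a_n + b_n ≤ ρ^n`, and there are `C > 0` and `ρ < ρ₁ < 1` (independent of the symbol
sequence) with `|a_n′| + |b_n′| ≤ C ρ₁^n`. -/
theorem word_probability_decay (π00 π01 π10 π11 ε : ℝ)
    (h00 : 0 < π00) (h01 : 0 < π01) (h10 : 0 < π10) (h11 : 0 < π11)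
    (hrow0 : π00 + π01 = 1) (hrow1 : π10 + π11 = 1)
    (hε0 : 0 < ε) (hε : ε < 1 / 2) :
    0 < max (max ((1 - ε) * π00 + ε * π01) ((1 - ε) * π10 + ε * π11))
          (max (ε * π00 + (1 - ε) * π01) (ε * π10 + (1 - ε) * π11)) ∧
    max (max ((1 - ε) * π00 + ε * π01) ((1 - ε) * π10 + ε * π11))
          (max (ε * π00 + (1 - ε) * π01) (ε * π10 + (1 - ε) * π11)) < 1 ∧
    (∀ z : ℕ → Bool, ∀ n : ℕ, 1 ≤ n →
      (abIter π00 π01 π10 π11 z n ε).1 + (abIter π00 π01 π10 π11 z n ε).2 ≤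
        (max (max ((1 - ε) * π00 + ε * π01) ((1 - ε) * π10 + ε * π11))
          (max (ε * π00 + (1 - ε) * π01) (ε * π10 + (1 - ε) * π11))) ^ n) ∧
    ∃ C : ℝ, 0 < C ∧ ∃ ρ₁ : ℝ,
      max (max ((1 - ε) * π00 + ε * π01) ((1 - ε) * π10 + ε * π11))
          (max (ε * π00 + (1 - ε) * π01) (ε * π10 + (1 - ε) * π11)) < ρ₁ ∧ ρ₁ < 1 ∧
      ∀ z : ℕ → Bool, ∀ n : ℕ, 1 ≤ n →
        |deriv (fun t => (abIter π00 π01 π10 π11 z n t).1) ε| +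
          |deriv (fun t => (abIter π00 π01 π10 π11 z n t).2) ε| ≤ C * ρ₁ ^ n := by
  set ρ := max (max ((1 - ε) * π00 + ε * π01) ((1 - ε) * π10 + ε * π11))
          (max (ε * π00 + (1 - ε) * π01) (ε * π10 + (1 - ε) * π11)) with hρdef
  have h1ε : 0 < 1 - ε := by linarith
  have hεle : ε ≤ 1 - ε := by linarith
  have hr1 : (1 - ε) * π00 + ε * π01 ≤ ρ := le_trans (le_max_left _ _) (le_max_left _ _)
  have hr2 : (1 - ε) * π10 + ε * π11 ≤ ρ := le_trans (le_max_right _ _) (le_max_left _ _)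
  have hr3 : ε * π00 + (1 - ε) * π01 ≤ ρ := le_trans (le_max_left _ _) (le_max_right _ _)
  have hr4 : ε * π10 + (1 - ε) * π11 ≤ ρ := le_trans (le_max_right _ _) (le_max_right _ _)
  have hρpos : 0 < ρ :=
    lt_of_lt_of_le (add_pos (mul_pos h1ε h00) (mul_pos hε0 h01)) hr1
  have hrow0' : (1 - ε) * (π00 + π01) = 1 - ε := by rw [hrow0]; ring
  have hrow1' : (1 - ε) * (π10 + π11) = 1 - ε := by rw [hrow1]; ring
  have hρlt : ρ < 1 := by
    have hle : ρ ≤ 1 - ε := by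
      refine max_le (max_le ?_ ?_) (max_le ?_ ?_)
      · linarith [hrow0', mul_le_mul_of_nonneg_right hεle h01.le]
      · linarith [hrow1', mul_le_mul_of_nonneg_right hεle h11.le]
      · linarith [hrow0', mul_le_mul_of_nonneg_right hεle h00.le]
      · linarith [hrow1', mul_le_mul_of_nonneg_right hεle h10.le]
    linarith
  -- Part (i), strengthened: nonnegativity and the bound hold for all n (including 0).
  have key : ∀ z : ℕ → Bool, ∀ n : ℕ,
      0 ≤ (abIter π00 π01 π10 π11 z n ε).1 ∧ 0 ≤ (abIter π00 π01 π10 π11 z n ε).2 ∧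
      (abIter π00 π01 π10 π11 z n ε).1 + (abIter π00 π01 π10 π11 z n ε).2 ≤ ρ ^ n := by
    intro z n
    induction n with
    | zero =>
      simp only [abIter]
      refine ⟨div_nonneg h10.le (by linarith), div_nonneg h01.le (by linarith), ?_⟩
      rw [pow_zero, ← add_div, div_le_one (by linarith)]
      linarith
    | succ k ih =>
      simp only [abIter]
      obtain ⟨ha, hb, hab⟩ := ih
      set a := (abIter π00 π01 π10 π11 z k ε).1 with ha_def
      set b := (abIter π00 π01 π10 π11 z k ε).2 with hb_def
      have hX : 0 ≤ π00 * a + π10 * b := add_nonneg (mul_nonneg h00.le ha) (mul_nonneg h10.le hb)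
      have hZ : 0 ≤ π01 * a + π11 * b := add_nonneg (mul_nonneg h01.le ha) (mul_nonneg h11.le hb)
      rcases Bool.eq_false_or_eq_true (z (k + 1)) with hz | hz <;>
        simp only [hz, Bool.false_eq_true, if_true, if_false, ite_true, ite_false] <;>
        rw [pow_succ]
      · exact ⟨mul_nonneg hε0.le hX, mul_nonneg h1ε.le hZ, by
          linarith [mul_le_mul_of_nonneg_right hr3 ha, mul_le_mul_of_nonneg_right hr4 hb,
            mul_le_mul_of_nonneg_left hab hρpos.le]⟩
      · exact ⟨mul_nonneg h1ε.le hX, mul_nonneg hε0.le hZ, by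
          linarith [mul_le_mul_of_nonneg_right hr1 ha, mul_le_mul_of_nonneg_right hr2 hb,
            mul_le_mul_of_nonneg_left hab hρpos.le]⟩
  -- Part (ii) core: derivative bound `|a_n'| + |b_n'| ≤ n ρ^(n-1)`.
  have dkey : ∀ z : ℕ → Bool, ∀ n : ℕ, ∃ a' b' : ℝ,
      HasDerivAt (fun t => (abIter π00 π01 π10 π11 z n t).1) a' ε ∧
      HasDerivAt (fun t => (abIter π00 π01 π10 π11 z n t).2) b' ε ∧
      |a'| + |b'| ≤ (n : ℝ) * ρ ^ (n - 1) := by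
    intro z n
    induction n with
    | zero =>
      refine ⟨0, 0, ?_, ?_, by simp⟩
      · exact hasDerivAt_const ε (π10 / (π01 + π10))
      · exact hasDerivAt_const ε (π01 / (π01 + π10))
    | succ k ih =>
      obtain ⟨a', b', hA, hB, hd⟩ := ih
      obtain ⟨ha, hb, hab⟩ := key z k
      set a := (abIter π00 π01 π10 π11 z k ε).1 with ha_def
      set b := (abIter π00 π01 π10 π11 z k ε).2 with hb_def
      set g' : ℝ := if z (k + 1) then 1 else -1 with hg'def
      set e1 : ℝ := if z (k + 1) then ε else 1 - ε with he1def
      set e2 : ℝ := if z (k + 1) then 1 - ε else ε with he2def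
      have hg'abs : |g'| = 1 := by
        rcases Bool.eq_false_or_eq_true (z (k + 1)) with hz | hz <;> simp [hg'def, hz]
      have he1pos : 0 ≤ e1 := by
        rcases Bool.eq_false_or_eq_true (z (k + 1)) with hz | hz <;> simp [he1def, hz] <;> linarith
      have he2pos : 0 ≤ e2 := by
        rcases Bool.eq_false_or_eq_true (z (k + 1)) with hz | hz <;> simp [he2def, hz] <;> linarith
      have hc1 : e1 * π00 + e2 * π01 ≤ ρ := by
        rcases Bool.eq_false_or_eq_true (z (k + 1)) with hz | hz <;>
          simp only [he1def, he2def, hz, Bool.false_eq_true, if_true, if_false,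
            ite_true, ite_false]
        · exact hr3
        · exact hr1
      have hc2 : e1 * π10 + e2 * π11 ≤ ρ := by
        rcases Bool.eq_false_or_eq_true (z (k + 1)) with hz | hz <;>
          simp only [he1def, he2def, hz, Bool.false_eq_true, if_true, if_false,
            ite_true, ite_false]
        · exact hr4
        · exact hr2
      have hout1 : HasDerivAt (fun t : ℝ => if z (k + 1) then t else 1 - t) g' ε := by
        rcases Bool.eq_false_or_eq_true (z (k + 1)) with hz | hz <;>
          simp only [hg'def, hz, Bool.false_eq_true, if_true, if_false, ite_true, ite_false]
        · exact hasDerivAt_id ε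
        · simpa using (hasDerivAt_id ε).const_sub 1
      have hout2 : HasDerivAt (fun t : ℝ => if z (k + 1) then 1 - t else t) (-g') ε := by
        rcases Bool.eq_false_or_eq_true (z (k + 1)) with hz | hz <;>
          simp only [hg'def, hz, Bool.false_eq_true, if_true, if_false, ite_true, ite_false]
        · simpa using (hasDerivAt_id ε).const_sub 1
        · simpa using hasDerivAt_id' ε
      have hinner1 : HasDerivAt (fun t => π00 * (abIter π00 π01 π10 π11 z k t).1 +
          π10 * (abIter π00 π01 π10 π11 z k t).2) (π00 * a' + π10 * b') ε :=
        (hA.const_mul π00).add (hB.const_mul π10)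
      have hinner2 : HasDerivAt (fun t => π01 * (abIter π00 π01 π10 π11 z k t).1 +
          π11 * (abIter π00 π01 π10 π11 z k t).2) (π01 * a' + π11 * b') ε :=
        (hA.const_mul π01).add (hB.const_mul π11)
      have hfun1 : (fun t => (abIter π00 π01 π10 π11 z (k + 1) t).1) = fun t =>
          (if z (k + 1) then t else 1 - t) *
            (π00 * (abIter π00 π01 π10 π11 z k t).1 + π10 * (abIter π00 π01 π10 π11 z k t).2) := by
        funext t; simp only [abIter]
      have hfun2 : (fun t => (abIter π00 π01 π10 π11 z (k + 1) t).2) = fun t =>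
          (if z (k + 1) then 1 - t else t) *
            (π01 * (abIter π00 π01 π10 π11 z k t).1 + π11 * (abIter π00 π01 π10 π11 z k t).2) := by
        funext t; simp only [abIter]
      have hA' : HasDerivAt (fun t => (abIter π00 π01 π10 π11 z (k + 1) t).1)
          (g' * (π00 * a + π10 * b) + e1 * (π00 * a' + π10 * b')) ε := by
        rw [hfun1]; exact hout1.mul hinner1
      have hB' : HasDerivAt (fun t => (abIter π00 π01 π10 π11 z (k + 1) t).2)
          ((-g') * (π01 * a + π11 * b) + e2 * (π01 * a' + π11 * b')) ε := by
        rw [hfun2]; exact hout2.mul hinner2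
      clear_value a b g' e1 e2
      refine ⟨g' * (π00 * a + π10 * b) + e1 * (π00 * a' + π10 * b'),
              (-g') * (π01 * a + π11 * b) + e2 * (π01 * a' + π11 * b'), hA', hB', ?_⟩
      · -- the bound
        have habs1 : |π00 * a' + π10 * b'| ≤ π00 * |a'| + π10 * |b'| := by
          calc |π00 * a' + π10 * b'| ≤ |π00 * a'| + |π10 * b'| := abs_add_le _ _
            _ = π00 * |a'| + π10 * |b'| := by
                rw [abs_mul, abs_mul, abs_of_pos h00, abs_of_pos h10]
        have habs2 : |π01 * a' + π11 * b'| ≤ π01 * |a'| + π11 * |b'| := by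
          calc |π01 * a' + π11 * b'| ≤ |π01 * a'| + |π11 * b'| := abs_add_le _ _
            _ = π01 * |a'| + π11 * |b'| := by
                rw [abs_mul, abs_mul, abs_of_pos h01, abs_of_pos h11]
        have hX : 0 ≤ π00 * a + π10 * b := add_nonneg (mul_nonneg h00.le ha) (mul_nonneg h10.le hb)
        have hZ : 0 ≤ π01 * a + π11 * b := add_nonneg (mul_nonneg h01.le ha) (mul_nonneg h11.le hb)
        have hbd1 : |g' * (π00 * a + π10 * b) + e1 * (π00 * a' + π10 * b')| ≤
            (π00 * a + π10 * b) + e1 * (π00 * |a'| + π10 * |b'|) := by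
          calc |g' * (π00 * a + π10 * b) + e1 * (π00 * a' + π10 * b')|
              ≤ |g' * (π00 * a + π10 * b)| + |e1 * (π00 * a' + π10 * b')| := abs_add_le _ _
            _ = (π00 * a + π10 * b) + e1 * |π00 * a' + π10 * b'| := by
                rw [abs_mul, abs_mul, hg'abs, abs_of_nonneg hX, abs_of_nonneg he1pos, one_mul]
            _ ≤ (π00 * a + π10 * b) + e1 * (π00 * |a'| + π10 * |b'|) := by
                have := mul_le_mul_of_nonneg_left habs1 he1pos
                linarith
        have hbd2 : |(-g') * (π01 * a + π11 * b) + e2 * (π01 * a' + π11 * b')| ≤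
            (π01 * a + π11 * b) + e2 * (π01 * |a'| + π11 * |b'|) := by
          calc |(-g') * (π01 * a + π11 * b) + e2 * (π01 * a' + π11 * b')|
              ≤ |(-g') * (π01 * a + π11 * b)| + |e2 * (π01 * a' + π11 * b')| := abs_add_le _ _
            _ = (π01 * a + π11 * b) + e2 * |π01 * a' + π11 * b'| := by
                rw [abs_mul, abs_mul, abs_neg, hg'abs, abs_of_nonneg hZ,
                  abs_of_nonneg he2pos, one_mul]
            _ ≤ (π01 * a + π11 * b) + e2 * (π01 * |a'| + π11 * |b'|) := by
                have := mul_le_mul_of_nonneg_left habs2 he2pos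
                linarith
        have hXZ : (π00 * a + π10 * b) + (π01 * a + π11 * b) = a + b := by
          have h : (π00 * a + π10 * b) + (π01 * a + π11 * b)
              = (π00 + π01) * a + (π10 + π11) * b := by ring
          rw [h, hrow0, hrow1]; ring
        have hmul : (k : ℝ) * ρ ^ (k - 1) * ρ = (k : ℝ) * ρ ^ k := by
          cases k with
          | zero => simp
          | succ m =>
            simp only [Nat.add_sub_cancel]
            rw [pow_succ]; ring
        have hn1 : (k + 1 : ℕ) - 1 = k := by omega
        rw [hn1]
        push_cast
        have hda : 0 ≤ |a'| := abs_nonneg a'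
        have hdb : 0 ≤ |b'| := abs_nonneg b'
        have hkey1 : e1 * (π00 * |a'| + π10 * |b'|) + e2 * (π01 * |a'| + π11 * |b'|) ≤
            ρ * |a'| + ρ * |b'| := by
          linarith [mul_le_mul_of_nonneg_right hc1 hda, mul_le_mul_of_nonneg_right hc2 hdb]
        have hkey2 : ρ * |a'| + ρ * |b'| ≤ ρ * ((k : ℝ) * ρ ^ (k - 1)) := by
          linarith [mul_le_mul_of_nonneg_left hd hρpos.le]
        have hkey3 : ρ * ((k : ℝ) * ρ ^ (k - 1)) = (k : ℝ) * ρ ^ k := by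
          rw [← hmul]; ring
        linarith [hbd1, hbd2, hXZ, hab, hkey1, hkey2, hkey3]
  refine ⟨hρpos, hρlt, fun z n hn => (key z n).2.2, 1 / ((1 + ρ) / 2 - ρ),
    div_pos one_pos (by linarith), (1 + ρ) / 2, by linarith, by linarith, ?_⟩
  intro z n hn
  obtain ⟨a', b', hA, hB, hd⟩ := dkey z n
  rw [hA.deriv, hB.deriv]
  obtain ⟨m, rfl⟩ := Nat.exists_eq_add_of_le hn
  set ρ₁ := (1 + ρ) / 2 with hρ₁def
  have hρ₁pos : 0 < ρ₁ := by rw [hρ₁def]; linarith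
  have hρρ₁ : ρ < ρ₁ := by rw [hρ₁def]; linarith
  -- geometric domination: (m+1) ρ^m ≤ C ρ₁^(m+1)
  have hgeom : ((m : ℝ) + 1) * ρ ^ m ≤ (1 / (ρ₁ - ρ)) * ρ₁ ^ (m + 1) := by
    set t := (ρ₁ - ρ) / ρ with ht_def
    have ht : 0 < t := div_pos (by linarith) hρpos
    have hpow : 1 + ((m : ℝ) + 1) * t ≤ (1 + t) ^ (m + 1) := by
      have h := one_add_mul_le_pow (a := t) (by linarith) (m + 1)
      push_cast at h ⊢
      linarith
    have h2 : (1 + t) * ρ = ρ₁ := by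
      rw [ht_def]; field_simp; ring
    have h3 : (1 + t) ^ (m + 1) * ρ ^ (m + 1) = ρ₁ ^ (m + 1) := by
      rw [← mul_pow, h2]
    have h4 : (1 + ((m : ℝ) + 1) * t) * ρ ^ (m + 1) ≤ ρ₁ ^ (m + 1) := by
      calc (1 + ((m : ℝ) + 1) * t) * ρ ^ (m + 1)
          ≤ (1 + t) ^ (m + 1) * ρ ^ (m + 1) :=
            mul_le_mul_of_nonneg_right hpow (pow_pos hρpos _).le
        _ = ρ₁ ^ (m + 1) := h3
    have h5 : t * ρ ^ (m + 1) = (ρ₁ - ρ) * ρ ^ m := by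
      rw [pow_succ, ht_def]; field_simp
    have h5' : ((m : ℝ) + 1) * (t * ρ ^ (m + 1)) = ((m : ℝ) + 1) * ((ρ₁ - ρ) * ρ ^ m) := by
      rw [h5]
    rw [div_mul_eq_mul_div, le_div_iff₀ (by linarith : (0:ℝ) < ρ₁ - ρ)]
    have hρm : 0 ≤ ρ ^ (m + 1) := (pow_pos hρpos _).le
    linarith [h4, h5', hρm]
  have hswap : (1 + m : ℕ) = m + 1 := by omega
  rw [hswap] at hd ⊢
  rw [Nat.add_sub_cancel] at hd
  calc |a'| + |b'| ≤ ((m + 1 : ℕ) : ℝ) * ρ ^ m := hd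
    _ = ((m : ℝ) + 1) * ρ ^ m := by push_cast; ring
    _ ≤ (1 / (ρ₁ - ρ)) * ρ₁ ^ (m + 1) := hgeom
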